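/- Let N ≥ 1 and let m, K̲, φ, α, λ₂ be positive reals. Let x̃, μ̃, z̃, ñ ∈ ℝ^N and F̃ ∈ ℝ^N satisfy ⟨x̃, F̃⟩ ≥ m‖x̃‖², and let L ∈ ℝ^{N×N} be symmetric with ⟨μ̃, L μ̃⟩ ≥ λ₂‖μ̃‖². Then −φ K̲ ⟨x̃, F̃ + μ̃⟩ + ⟨μ̃, x̃ − α L μ̃ − z̃⟩ + ⟨μ̃ + z̃, x̃ − z̃⟩ − ‖ñ‖² ≤ −(φ K̲ m − K̲/2 − 1/2)‖x̃‖² − (α λ₂ − φ² K̲/2 − 2)‖μ̃‖² − (1/2)‖z̃‖² − ‖ñ‖². -/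
import Mathlib


open scoped RealInnerProductSpace

/-- Key Lyapunov-derivative estimate in the proof of Theorem 1 (lam₂ is the algebraic
connectivity λ₂ of the communication graph, K the minimal gain K̲; xv = x̃, muv = μ̃,
zv = z̃, nv = ñ, Fv = F̃ = F(x̂ᵃ) − F(x*); `L.mulVec` viewed in Euclidean space). -/
theorem lyapunov_estimate_thm1 {N : ℕ} (hN : 1 ≤ N)
    (m K φ α lam₂ : ℝ) (hm : 0 < m) (hK : 0 < K) (hφ : 0 < φ) (hα : 0 < α)
    (hlam₂ : 0 < lam₂)
    (xv muv zv nv Fv : EuclideanSpace ℝ (Fin N))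
    (L : Matrix (Fin N) (Fin N) ℝ) (hLsymm : L.IsSymm)
    (Lmu : EuclideanSpace ℝ (Fin N)) (hLmu : ∀ i, Lmu i = L.mulVec muv i)
    (hmono : m * ‖xv‖ ^ 2 ≤ ⟪xv, Fv⟫)
    (hL : lam₂ * ‖muv‖ ^ 2 ≤ ⟪muv, Lmu⟫) :
    -(φ * K) * ⟪xv, Fv + muv⟫
        + ⟪muv, xv - α • Lmu - zv⟫
        + ⟪muv + zv, xv - zv⟫ - ‖nv‖ ^ 2 ≤
      -(φ * K * m - K / 2 - 1 / 2) * ‖xv‖ ^ 2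
        - (α * lam₂ - φ ^ 2 * K / 2 - 2) * ‖muv‖ ^ 2
        - (1 / 2) * ‖zv‖ ^ 2 - ‖nv‖ ^ 2 := by
  have e1 : (0:ℝ) ≤ ‖xv‖ ^ 2 + 2 * (φ * ⟪xv, muv⟫) + φ ^ 2 * ‖muv‖ ^ 2 := by
    have h : ‖xv + φ • muv‖ ^ 2
        = ‖xv‖ ^ 2 + 2 * (φ * ⟪xv, muv⟫) + φ ^ 2 * ‖muv‖ ^ 2 := by
      rw [norm_add_sq_real, real_inner_smul_right, norm_smul, Real.norm_eq_abs,
        mul_pow, sq_abs]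
    simpa [h] using sq_nonneg ‖xv + φ • muv‖
  have e2 : (0:ℝ) ≤ ‖xv - zv‖ ^ 2 - 2 * (2 * ⟪xv - zv, muv⟫) + 4 * ‖muv‖ ^ 2 := by
    have h : ‖xv - zv - (2:ℝ) • muv‖ ^ 2
        = ‖xv - zv‖ ^ 2 - 2 * (2 * ⟪xv - zv, muv⟫) + 4 * ‖muv‖ ^ 2 := by
      rw [norm_sub_sq_real, real_inner_smul_right, norm_smul, Real.norm_eq_abs]
      rw [mul_pow]
      norm_num
    simpa [h] using sq_nonneg ‖xv - zv - (2:ℝ) • muv‖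
  have e3 : ‖xv - zv‖ ^ 2 = ‖xv‖ ^ 2 - 2 * ⟪xv, zv⟫ + ‖zv‖ ^ 2 := norm_sub_sq_real xv zv
  have e4 : ⟪xv - zv, muv⟫ = ⟪xv, muv⟫ - ⟪zv, muv⟫ := inner_sub_left xv zv muv
  have c1 : ⟪muv, xv⟫ = ⟪xv, muv⟫ := real_inner_comm _ _
  have c2 : ⟪muv, zv⟫ = ⟪zv, muv⟫ := real_inner_comm _ _
  have c3 : ⟪zv, xv⟫ = ⟪xv, zv⟫ := real_inner_comm _ _
  have hz : ⟪zv, zv⟫ = ‖zv‖ ^ 2 := real_inner_self_eq_norm_sq zv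
  have l1 : ⟪xv, Fv + muv⟫ = ⟪xv, Fv⟫ + ⟪xv, muv⟫ := inner_add_right xv Fv muv
  have l2 : ⟪muv, xv - α • Lmu - zv⟫ = ⟪xv, muv⟫ - α * ⟪muv, Lmu⟫ - ⟪zv, muv⟫ := by
    rw [inner_sub_right, inner_sub_right, real_inner_smul_right, c1, c2]
  have l3 : ⟪muv + zv, xv - zv⟫
      = ⟪xv, muv⟫ - ⟪zv, muv⟫ + ⟪xv, zv⟫ - ‖zv‖ ^ 2 := by
    rw [inner_add_left, inner_sub_right, inner_sub_right, c1, c2, c3, hz]; ring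
  have hmono' : φ * K * (m * ‖xv‖ ^ 2) ≤ φ * K * ⟪xv, Fv⟫ :=
    mul_le_mul_of_nonneg_left hmono (by positivity)
  have hL' : α * (lam₂ * ‖muv‖ ^ 2) ≤ α * ⟪muv, Lmu⟫ :=
    mul_le_mul_of_nonneg_left hL hα.le
  rw [l1, l2, l3]
  nlinarith [mul_nonneg hK.le e1, e2, e3, e4]
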